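/- The function G(α) = Σ_x n_x · log(1 + Σ_y exp(α_{xy})), defined on R^{X×Y} with n_x > 0, is convex and submodular. -/

import Mathlib

open Finset

private lemma holder_exp_sum {I : Type*} [Fintype I] [Nonempty I] (F G : I → ℝ) {p q : ℝ}
    (hp : 0 ≤ p) (hq : 0 ≤ q) (hpq : p + q = 1) :
    ∑ i, Real.exp (p * F i + q * G i) ≤
      (∑ i, Real.exp (F i)) ^ p * (∑ i, Real.exp (G i)) ^ q := by
  set A := ∑ i, Real.exp (F i) with hA'
  set B := ∑ i, Real.exp (G i) with hB'
  have hA : 0 < A := Finset.sum_pos (fun i _ => Real.exp_pos _) Finset.univ_nonempty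
  have hB : 0 < B := Finset.sum_pos (fun i _ => Real.exp_pos _) Finset.univ_nonempty
  have key : ∀ i : I, Real.exp (p * F i + q * G i) ≤
      A ^ p * B ^ q * (p * (Real.exp (F i) / A) + q * (Real.exp (G i) / B)) := by
    intro i
    have h1 : Real.exp (p * F i + q * G i)
        = (A * (Real.exp (F i) / A)) ^ p * (B * (Real.exp (G i) / B)) ^ q := by
      rw [mul_div_cancel₀ _ hA.ne', mul_div_cancel₀ _ hB.ne', Real.exp_add,
        mul_comm p, mul_comm q, Real.exp_mul, Real.exp_mul]
    rw [h1, Real.mul_rpow hA.le (by positivity), Real.mul_rpow hB.le (by positivity)]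
    have h2 := Real.geom_mean_le_arith_mean2_weighted (p₁ := Real.exp (F i) / A)
      (p₂ := Real.exp (G i) / B) hp hq
      (div_nonneg (Real.exp_pos _).le hA.le) (div_nonneg (Real.exp_pos _).le hB.le) hpq
    calc A ^ p * (Real.exp (F i) / A) ^ p * (B ^ q * (Real.exp (G i) / B) ^ q)
        = A ^ p * B ^ q * ((Real.exp (F i) / A) ^ p * (Real.exp (G i) / B) ^ q) := by ring
      _ ≤ A ^ p * B ^ q * (p * (Real.exp (F i) / A) + q * (Real.exp (G i) / B)) := by
          apply mul_le_mul_of_nonneg_left h2 (by positivity)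
  calc ∑ i, Real.exp (p * F i + q * G i)
      ≤ ∑ i, A ^ p * B ^ q * (p * (Real.exp (F i) / A) + q * (Real.exp (G i) / B)) :=
        Finset.sum_le_sum fun i _ => key i
    _ = A ^ p * B ^ q := by
        rw [← Finset.mul_sum, Finset.sum_add_distrib, ← Finset.mul_sum, ← Finset.mul_sum,
          ← Finset.sum_div, ← Finset.sum_div, ← hA', ← hB',
          div_self hA.ne', div_self hB.ne']
        rw [mul_one, mul_one, hpq, mul_one]

private lemma log_lse_convex {Y : Type*} [Fintype Y] (f g : Y → ℝ) {p q : ℝ}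
    (hp : 0 ≤ p) (hq : 0 ≤ q) (hpq : p + q = 1) :
    Real.log (1 + ∑ y, Real.exp (p * f y + q * g y)) ≤
      p * Real.log (1 + ∑ y, Real.exp (f y)) + q * Real.log (1 + ∑ y, Real.exp (g y)) := by
  have hposf : (0:ℝ) < 1 + ∑ y, Real.exp (f y) := by positivity
  have hposg : (0:ℝ) < 1 + ∑ y, Real.exp (g y) := by positivity
  have hpos : (0:ℝ) < 1 + ∑ y, Real.exp (p * f y + q * g y) := by positivity
  have e : ∀ h : Y → ℝ, (1:ℝ) + ∑ y, Real.exp (h y)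
      = ∑ o : Option Y, Real.exp (o.elim 0 h) := by
    intro h; rw [Fintype.sum_option]; simp
  have hh := holder_exp_sum (fun o : Option Y => o.elim 0 f) (fun o : Option Y => o.elim 0 g)
    hp hq hpq
  have e3 : (∑ o : Option Y, Real.exp (p * (o.elim 0 f) + q * (o.elim 0 g)))
      = 1 + ∑ y, Real.exp (p * f y + q * g y) := by
    rw [Fintype.sum_option]; simp
  rw [e3, ← e f, ← e g] at hh
  calc Real.log (1 + ∑ y, Real.exp (p * f y + q * g y))
      ≤ Real.log ((1 + ∑ y, Real.exp (f y)) ^ p * (1 + ∑ y, Real.exp (g y)) ^ q) :=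
        Real.log_le_log hpos hh
    _ = p * Real.log (1 + ∑ y, Real.exp (f y)) + q * Real.log (1 + ∑ y, Real.exp (g y)) := by
        rw [Real.log_mul (by positivity) (by positivity), Real.log_rpow hposf,
          Real.log_rpow hposg]

private lemma pair_ineq (a b c d : ℝ) :
    max a b * min c d + max c d * min a b ≤ a * d + c * b := by
  rcases le_total a b with h | h <;> rcases le_total c d with h' | h' <;>
    simp [max_eq_left, max_eq_right, min_eq_left, min_eq_right, h, h'] <;> nlinarith

private lemma prod_sum_ineq {Y : Type*} [Fintype Y] (a b : Y → ℝ) :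
    (∑ y, max (a y) (b y)) * (∑ y, min (a y) (b y)) ≤ (∑ y, a y) * (∑ y, b y) := by
  have key : ∑ y : Y, ∑ z : Y, (max (a y) (b y) * min (a z) (b z)
        + max (a z) (b z) * min (a y) (b y))
      ≤ ∑ y : Y, ∑ z : Y, (a y * b z + a z * b y) :=
    Finset.sum_le_sum fun y _ => Finset.sum_le_sum fun z _ => pair_ineq (a y) (b y) (a z) (b z)
  have expand : ∀ u v : Y → ℝ, ∑ y : Y, ∑ z : Y, (u y * v z + u z * v y)
      = 2 * ((∑ y, u y) * (∑ y, v y)) := by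
    intro u v
    simp only [Finset.sum_add_distrib]
    rw [Finset.sum_comm (f := fun y z => u z * v y)]
    rw [← Finset.sum_mul_sum]
    ring
  rw [expand, expand] at key
  linarith

/-- The logit welfare function `G(α) = Σ_x n_x log(1 + Σ_y exp α_{xy})` is convex
and submodular. -/
theorem logit_welfare_convex_submodular {X Y : Type*} [Fintype X] [Fintype Y]
    (n : X → ℝ) (hn : ∀ x, 0 < n x)
    (G : (X × Y → ℝ) → ℝ)
    (hG : ∀ α, G α = ∑ x : X, n x * Real.log (1 + ∑ y : Y, Real.exp (α (x, y)))) :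
    ConvexOn ℝ Set.univ G ∧
      ∀ α α' : X × Y → ℝ, G (α ⊔ α') + G (α ⊓ α') ≤ G α + G α' := by
  constructor
  · refine ⟨convex_univ, fun α _ β _ p q hp hq hpq => ?_⟩
    simp only [hG]
    have : ∀ x y, (p • α + q • β) (x, y) = p * α (x, y) + q * β (x, y) := by
      intro x y; simp [smul_eq_mul]
    rw [Finset.smul_sum, Finset.smul_sum, ← Finset.sum_add_distrib]
    apply Finset.sum_le_sum
    intro x _
    simp only [smul_eq_mul, this]
    have h := log_lse_convex (fun y => α (x, y)) (fun y => β (x, y)) hp hq hpq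
    calc n x * Real.log (1 + ∑ y, Real.exp (p * α (x, y) + q * β (x, y)))
        ≤ n x * (p * Real.log (1 + ∑ y, Real.exp (α (x, y)))
            + q * Real.log (1 + ∑ y, Real.exp (β (x, y)))) :=
          mul_le_mul_of_nonneg_left h (hn x).le
      _ = p * (n x * Real.log (1 + ∑ y, Real.exp (α (x, y))))
            + q * (n x * Real.log (1 + ∑ y, Real.exp (β (x, y)))) := by ring
  · intro α α'
    simp only [hG]
    rw [← Finset.sum_add_distrib, ← Finset.sum_add_distrib]
    apply Finset.sum_le_sum
    intro x _
    set a : Y → ℝ := fun y => Real.exp (α (x, y))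
    set b : Y → ℝ := fun y => Real.exp (α' (x, y))
    have ha : ∀ y, 0 < a y := fun y => Real.exp_pos _
    have hb : ∀ y, 0 < b y := fun y => Real.exp_pos _
    have hsup : ∀ y, Real.exp ((α ⊔ α') (x, y)) = max (a y) (b y) := by
      intro y; simp only [Pi.sup_apply]
      exact Real.exp_monotone.map_max
    have hinf : ∀ y, Real.exp ((α ⊓ α') (x, y)) = min (a y) (b y) := by
      intro y; simp only [Pi.inf_apply]
      exact Real.exp_monotone.map_min
    simp only [hsup, hinf]
    rw [← mul_add, ← mul_add]
    apply mul_le_mul_of_nonneg_left _ (hn x).le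
    have hP1 : (0:ℝ) < 1 + ∑ y, max (a y) (b y) := by
      have : ∀ y ∈ Finset.univ, (0:ℝ) ≤ max (a y) (b y) :=
        fun y _ => le_max_of_le_left (ha y).le
      nlinarith [Finset.sum_nonneg this]
    have hP2 : (0:ℝ) < 1 + ∑ y, min (a y) (b y) := by
      have : ∀ y ∈ Finset.univ, (0:ℝ) ≤ min (a y) (b y) :=
        fun y _ => le_min (ha y).le (hb y).le
      nlinarith [Finset.sum_nonneg this]
    have hQ1 : (0:ℝ) < 1 + ∑ y, a y := by positivity
    have hQ2 : (0:ℝ) < 1 + ∑ y, b y := by positivity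
    rw [← Real.log_mul hP1.ne' hP2.ne', ← Real.log_mul hQ1.ne' hQ2.ne']
    apply Real.log_le_log (by positivity)
    have hlin : (∑ y, max (a y) (b y)) + (∑ y, min (a y) (b y))
        = (∑ y, a y) + (∑ y, b y) := by
      rw [← Finset.sum_add_distrib, ← Finset.sum_add_distrib]
      exact Finset.sum_congr rfl fun y _ => max_add_min _ _
    have hprod := prod_sum_ineq a b
    nlinarith [hprod, hlin]
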